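/- arXiv:1208.1647 — 2 statements merged into one kernel-verified Lean document; each statement's English description precedes it below -/
import Mathlib

section
/- For every natural number n and every finite set X of cardinality n + 1, the sum over all set partitions P of X of (|P| − 1)!, where |P| denotes the number of blocks of P, satisfies ∑_{P partition of X} (|P| − 1)! ≤ n! · e^{n+2}. -/
open Real

section aux

variable {α : Type*} [DecidableEq α] {X : Finset α}

/-- The coloring map associated to a partition with `k` parts and a permutation. -/
noncomputable def colorMap (P : Finpartition X) {k : ℕ} (hP : P.parts.card = k)
    (σ : Equiv.Perm (Fin k)) : {x // x ∈ X} → Fin k :=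
  fun x => σ (finCongr hP (P.parts.equivFin ⟨P.part x.1, P.part_mem.2 x.2⟩))

lemma colorMap_eq_iff (P : Finpartition X) {k : ℕ} (hP : P.parts.card = k)
    (σ : Equiv.Perm (Fin k)) (x y : {x // x ∈ X}) :
    colorMap P hP σ x = colorMap P hP σ y ↔ P.part x.1 = P.part y.1 := by
  unfold colorMap
  rw [σ.injective.eq_iff, (finCongr hP).injective.eq_iff,
    P.parts.equivFin.injective.eq_iff, Subtype.ext_iff]

lemma part_subset (P : Finpartition X) {x : α} (hx : x ∈ X) : P.part x ⊆ X :=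
  P.le (P.part_mem.2 hx)

lemma colorMap_inj {k : ℕ} :
    Function.Injective (fun PS : {P : Finpartition X // P.parts.card = k} × Equiv.Perm (Fin k) =>
      colorMap PS.1.1 PS.1.2 PS.2) := by
  rintro ⟨⟨P, hP⟩, σ⟩ ⟨⟨Q, hQ⟩, τ⟩ h
  simp only at h
  -- part functions agree on X
  have hpart : ∀ x ∈ X, P.part x = Q.part x := by
    intro x hx
    ext y
    by_cases hy : y ∈ X
    · rw [P.mem_part_iff_part_eq_part hy hx, Q.mem_part_iff_part_eq_part hy hx,
        ← colorMap_eq_iff P hP σ ⟨y, hy⟩ ⟨x, hx⟩, ← colorMap_eq_iff Q hQ τ ⟨y, hy⟩ ⟨x, hx⟩, h]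
    · exact iff_of_false (fun h' => hy (part_subset P hx h')) (fun h' => hy (part_subset Q hx h'))
  have hPQ : P = Q := by
    ext t
    constructor
    · intro ht
      obtain ⟨x, hx⟩ := P.nonempty_of_mem_parts ht
      have hxX : x ∈ X := P.le ht hx
      rw [← P.part_eq_of_mem ht hx, hpart x hxX]
      exact Q.part_mem.2 hxX
    · intro ht
      obtain ⟨x, hx⟩ := Q.nonempty_of_mem_parts ht
      have hxX : x ∈ X := Q.le ht hx
      rw [← Q.part_eq_of_mem ht hx, ← hpart x hxX]
      exact P.part_mem.2 hxX
  subst hPQ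
  suffices hστ : σ = τ by subst hστ; rfl
  ext i
  obtain ⟨t, ht⟩ : ∃ t : {t // t ∈ P.parts}, finCongr hP (P.parts.equivFin t) = i :=
    ⟨P.parts.equivFin.symm ((finCongr hP).symm i), by simp⟩
  obtain ⟨x, hx⟩ := P.nonempty_of_mem_parts t.2
  have hxX : x ∈ X := P.le t.2 hx
  have hx' : P.part x = t.1 := P.part_eq_of_mem t.2 hx
  have := congrFun h ⟨x, hxX⟩
  unfold colorMap at this
  have ht' : (⟨P.part x, P.part_mem.2 hxX⟩ : {t // t ∈ P.parts}) = t := Subtype.ext hx'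
  rw [ht', ht] at this
  exact congrArg Fin.val this

lemma stirling_bound (k : ℕ) :
    (Finset.univ.filter (fun P : Finpartition X => P.parts.card = k)).card * k.factorial
      ≤ k ^ X.card := by
  classical
  have h := Fintype.card_le_of_injective _ (colorMap_inj (X := X) (k := k))
  rw [Fintype.card_prod, Fintype.card_fun, Fintype.card_coe, Fintype.card_fin,
    Fintype.card_perm, Fintype.card_fin, Fintype.card_subtype] at h
  exact h

end aux

/-- For a finite set `X` of cardinality `n + 1`, the sum over all set partitions `P`
of `X` of `(|P| − 1)!` is at most `n! · e^{n+2}`. -/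
theorem stmt5 {α : Type*} [DecidableEq α] (n : ℕ) (X : Finset α)
    (hX : X.card = n + 1) :
    ∑ P : Finpartition X, ((P.parts.card - 1).factorial : ℝ)
      ≤ (n.factorial : ℝ) * Real.exp (n + 2) := by
  classical
  have hmaps : ∀ P : Finpartition X, P ∈ Finset.univ →
      P.parts.card ∈ Finset.range (n + 2) := by
    intro P _
    rw [Finset.mem_range]
    have := P.card_parts_le_card
    omega
  rw [← Finset.sum_fiberwise_of_maps_to hmaps (fun P => ((P.parts.card - 1).factorial : ℝ))]
  have step1 : ∀ k ∈ Finset.range (n + 2),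
      (∑ P ∈ Finset.univ.filter (fun P : Finpartition X => P.parts.card = k),
        ((P.parts.card - 1).factorial : ℝ)) ≤ (k : ℝ) ^ n := by
    intro k hk
    have hsum : (∑ P ∈ Finset.univ.filter (fun P : Finpartition X => P.parts.card = k),
        ((P.parts.card - 1).factorial : ℝ))
        = ((Finset.univ.filter (fun P : Finpartition X => P.parts.card = k)).card
          * (k - 1).factorial : ℕ) := by
      push_cast
      rw [Finset.sum_congr rfl (fun P hP => by
        rw [(Finset.mem_filter.1 hP).2])]
      rw [Finset.sum_const, nsmul_eq_mul]
    rw [hsum]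
    have key : (Finset.univ.filter (fun P : Finpartition X => P.parts.card = k)).card
        * (k - 1).factorial ≤ k ^ n := by
      rcases Nat.eq_zero_or_pos k with rfl | hk0
      · -- no partition of a nonempty set has 0 parts
        have : (Finset.univ.filter (fun P : Finpartition X => P.parts.card = 0)).card = 0 := by
          rw [Finset.card_eq_zero, Finset.filter_eq_empty_iff]
          intro P _
          intro h0
          have h1 : P.parts = ∅ := Finset.card_eq_zero.1 h0
          have h2 : X = ∅ := by
            have := P.biUnion_parts
            rw [h1] at this
            simpa using this.symm
          rw [h2] at hX
          simp at hX
        rw [this, Nat.zero_mul]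
        exact Nat.zero_le _
      · have h := stirling_bound (X := X) k
        rw [hX] at h
        have hfac : k.factorial = k * (k - 1).factorial := by
          cases k with
          | zero => omega
          | succ m => simp [Nat.factorial_succ]
        rw [hfac, ← mul_assoc, mul_comm _ k, mul_assoc] at h
        have hpow : k ^ (n + 1) = k * k ^ n := by ring
        rw [hpow] at h
        exact Nat.le_of_mul_le_mul_left h hk0
    calc ((Finset.univ.filter (fun P : Finpartition X => P.parts.card = k)).card
          * (k - 1).factorial : ℕ) ≤ ((k ^ n : ℕ) : ℝ) := by exact_mod_cast key
      _ = (k : ℝ) ^ n := by push_cast; ring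
  have step2 : ∑ k ∈ Finset.range (n + 2), (k : ℝ) ^ n
      ≤ ∑ k ∈ Finset.range (n + 2), (n.factorial : ℝ) * Real.exp k := by
    refine Finset.sum_le_sum fun k _ => ?_
    have := Real.pow_div_factorial_le_exp (x := (k : ℝ)) (by positivity) n
    rw [div_le_iff₀ (by positivity)] at this
    calc (k : ℝ) ^ n ≤ Real.exp k * n.factorial := this
      _ = (n.factorial : ℝ) * Real.exp k := by ring
  have step3 : ∑ k ∈ Finset.range (n + 2), (n.factorial : ℝ) * Real.exp k
      ≤ (n.factorial : ℝ) * Real.exp (n + 2) := by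
    rw [← Finset.mul_sum]
    refine mul_le_mul_of_nonneg_left ?_ (by positivity)
    have hgeom : ∑ k ∈ Finset.range (n + 2), Real.exp 1 ^ k
        = (Real.exp 1 ^ (n + 2) - 1) / (Real.exp 1 - 1) := by
      exact geom_sum_eq (by
        intro h
        have := Real.exp_one_gt_d9
        rw [h] at this; norm_num at this) _
    have hrw : ∀ k : ℕ, Real.exp (k : ℝ) = Real.exp 1 ^ k := by
      intro k
      rw [← Real.exp_nat_mul]; norm_num
    rw [Finset.sum_congr rfl (fun k _ => hrw k), hgeom]
    have he : (1 : ℝ) ≤ Real.exp 1 - 1 := by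
      have := Real.exp_one_gt_d9; norm_num at this ⊢; linarith
    have hpos : (0 : ℝ) < Real.exp 1 - 1 := by linarith
    have h2 : Real.exp ((n : ℝ) + 2) = Real.exp 1 ^ (n + 2) := by
      rw [← Real.exp_nat_mul]; push_cast; ring_nf
    rw [h2, div_le_iff₀ hpos]
    nlinarith [pow_pos (Real.exp_pos 1) (n + 2)]
  calc ∑ k ∈ Finset.range (n + 2),
        (∑ P ∈ Finset.univ.filter (fun P : Finpartition X => P.parts.card = k),
          ((P.parts.card - 1).factorial : ℝ))
      ≤ ∑ k ∈ Finset.range (n + 2), (k : ℝ) ^ n := Finset.sum_le_sum step1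
    _ ≤ _ := le_trans step2 step3
end

section
/- Let R be an associative unital ℚ-algebra, let a, b : ℕ → R be sequences, and suppose b(0) is a unit of R with inverse b(0)⁻¹. For each n ≥ 0 define v(n) := n! · ∑_{k=0}^{n} (−1)^k ∑ (1/(n − m_1 − … − m_k)!) · a(n − m_1 − … − m_k) · b(0)⁻¹ · ∏_{j=1}^{k} ( (1/m_j!) · b(m_j) · b(0)⁻¹ ), where the inner sum runs over all k-tuples (m_1, …, m_k) of positive integers with m_1 + … + m_k ≤ n and the product over j is taken in order of increasing j. Then for every n ≥ 0 the recurrence relation a(n) = ∑_{k=0}^{n} C(n, k) · v(n − k) · b(k) holds, where C(n, k) is the binomial coefficient. -/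
open Finset

section Aux

variable {R : Type*} [Ring R] [Algebra ℚ R] (a b : ℕ → R) (binv : R)

/-- The index set of `k`-tuples of positive integers with sum ≤ `n`. -/
def stmt7Pset (n k : ℕ) : Finset (Fin k → ℕ) :=
  (Fintype.piFinset fun _ : Fin k => Finset.Icc 1 n).filter
    (fun m : Fin k → ℕ => ∑ j, m j ≤ n)

/-- The inner sum appearing in the definition of `v`. -/
def stmt7F (n k : ℕ) : R :=
  ∑ m ∈ stmt7Pset n k,
    (((n - ∑ j, m j).factorial : ℚ)⁻¹) •
      (a (n - ∑ j, m j) * binv *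
        (List.ofFn fun j : Fin k =>
          (((m j).factorial : ℚ)⁻¹) • (b (m j) * binv)).prod)

lemma stmt7Pset_eq_empty {n k : ℕ} (h : n < k) : stmt7Pset n k = ∅ := by
  ext m
  simp only [stmt7Pset, mem_filter, Fintype.mem_piFinset, mem_Icc, notMem_empty, iff_false,
    not_and]
  intro h1 h2
  have hk : k ≤ ∑ j, m j := by
    calc k = ∑ _j : Fin k, 1 := by simp
    _ ≤ ∑ j, m j := Finset.sum_le_sum fun j _ => (h1 j).1
  omega

lemma stmt7F_of_lt {n k : ℕ} (h : n < k) : stmt7F a b binv n k = 0 := by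
  rw [stmt7F, stmt7Pset_eq_empty h, Finset.sum_empty]

lemma stmt7F_zero (n : ℕ) : stmt7F a b binv n 0 = ((n.factorial : ℚ)⁻¹) • (a n * binv) := by
  rw [stmt7F]
  rw [show stmt7Pset n 0 = {(fun j => 0 : Fin 0 → ℕ)} from by
    ext m
    simp only [stmt7Pset, mem_filter, Fintype.mem_piFinset, mem_singleton]
    constructor
    · intro _; exact funext fun j => j.elim0
    · rintro rfl; exact ⟨fun j => j.elim0, by simp⟩]
  simp

lemma stmt7F_succ (n k : ℕ) :
    stmt7F a b binv n (k + 1) =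
      ∑ ℓ ∈ Icc 1 n, stmt7F a b binv (n - ℓ) k * (((ℓ.factorial : ℚ)⁻¹) • (b ℓ * binv)) := by
  simp only [stmt7F, Finset.sum_mul]
  rw [Finset.sum_sigma']
  refine Finset.sum_nbij' (fun m => ⟨m (Fin.last k), Fin.init m⟩)
    (fun p => Fin.snoc p.2 p.1) ?_ ?_ ?_ ?_ ?_
  · intro m hm
    simp only [stmt7Pset, mem_filter, Fintype.mem_piFinset, mem_Icc] at hm
    obtain ⟨h1, h2⟩ := hm
    rw [Fin.sum_univ_castSucc] at h2
    simp only [Finset.mem_sigma, mem_Icc, stmt7Pset, mem_filter, Fintype.mem_piFinset]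
    have hsum : ∑ j : Fin k, Fin.init m j = ∑ j : Fin k, m j.castSucc :=
      Finset.sum_congr rfl fun j _ => rfl
    refine ⟨⟨(h1 (Fin.last k)).1, (h1 (Fin.last k)).2⟩, fun j => ?_, ?_⟩
    · have hle : m j.castSucc ≤ ∑ i : Fin k, m i.castSucc :=
        Finset.single_le_sum (f := fun i : Fin k => m i.castSucc)
          (fun i _ => Nat.zero_le _) (Finset.mem_univ j)
      have hj : Fin.init m j = m j.castSucc := rfl
      rw [hj]
      exact ⟨(h1 j.castSucc).1, by omega⟩
    · rw [hsum]; omega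
  · intro p hp
    simp only [Finset.mem_sigma, mem_Icc, stmt7Pset, mem_filter, Fintype.mem_piFinset] at hp
    obtain ⟨⟨h1, h2⟩, h3, h4⟩ := hp
    simp only [stmt7Pset, mem_filter, Fintype.mem_piFinset, mem_Icc]
    constructor
    · intro j
      refine Fin.lastCases ?_ (fun i => ?_) j
      · rw [Fin.snoc_last]; exact ⟨h1, h2⟩
      · rw [Fin.snoc_castSucc]
        exact ⟨(h3 i).1, le_trans (h3 i).2 (Nat.sub_le n p.1)⟩
    · rw [Fin.sum_univ_castSucc]
      simp only [Fin.snoc_castSucc, Fin.snoc_last]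
      omega
  · intro m _; exact Fin.snoc_init_self m
  · intro p _
    ext : 1
    · simp
    · simp [Fin.init_snoc]
  · intro m hm
    simp only [stmt7Pset, mem_filter, Fintype.mem_piFinset, mem_Icc] at hm
    obtain ⟨h1, h2⟩ := hm
    rw [Fin.sum_univ_castSucc] at h2
    dsimp only
    have hsub : n - (∑ j : Fin k, Fin.init m j + m (Fin.last k))
        = n - m (Fin.last k) - ∑ j : Fin k, Fin.init m j := by omega
    rw [show (∑ j : Fin (k+1), m j) = ∑ j : Fin k, Fin.init m j + m (Fin.last k) from
      Fin.sum_univ_castSucc m, hsub,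
      show (List.ofFn fun j : Fin (k + 1) => (((m j).factorial : ℚ)⁻¹) • (b (m j) * binv))
        = (List.ofFn fun j : Fin k =>
            (((Fin.init m j).factorial : ℚ)⁻¹) • (b (Fin.init m j) * binv)).concat
          ((((m (Fin.last k)).factorial : ℚ)⁻¹) • (b (m (Fin.last k)) * binv)) from
      List.ofFn_succ' _]
    simp only [List.prod_concat, smul_mul_assoc, mul_assoc]

end Aux

/-- Abstract noncommutative form of the kinetic cluster expansions: if
`v(n) = n! ∑_{k=0}^{n} (−1)^k ∑_{m₁+⋯+m_k ≤ n, mⱼ ≥ 1}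
  (1/(n−m₁−⋯−m_k)!) a(n−m₁−⋯−m_k) b(0)⁻¹ ∏_{j=1}^{k} ((1/mⱼ!) b(mⱼ) b(0)⁻¹)`
(product taken in order of increasing `j`), then the recurrence relations
`a(n) = ∑_{k=0}^{n} C(n,k) v(n−k) b(k)` hold. -/
theorem stmt7 {R : Type*} [Ring R] [Algebra ℚ R] (a b : ℕ → R) (binv : R)
    (hb : b 0 * binv = 1) (hb' : binv * b 0 = 1) (v : ℕ → R)
    (hv : ∀ n, v n = (n.factorial : ℚ) •
      ∑ k ∈ Finset.range (n + 1), (-1 : R) ^ k *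
        ∑ m ∈ (Fintype.piFinset fun _ : Fin k => Finset.Icc 1 n).filter
            (fun m : Fin k → ℕ => ∑ j, m j ≤ n),
          (((n - ∑ j, m j).factorial : ℚ)⁻¹) •
            (a (n - ∑ j, m j) * binv *
              (List.ofFn fun j : Fin k =>
                (((m j).factorial : ℚ)⁻¹) • (b (m j) * binv)).prod)) :
    ∀ n, a n = ∑ k ∈ Finset.range (n + 1), (n.choose k : ℚ) • (v (n - k) * b k) := by
  have hv' : ∀ n, v n = (n.factorial : ℚ) •
      ∑ k ∈ Finset.range (n + 1), (-1 : R) ^ k * stmt7F a b binv n k := by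
    intro n; rw [hv n]; rfl
  have hne : ∀ m : ℕ, ((m.factorial : ℚ)) ≠ 0 :=
    fun m => Nat.cast_ne_zero.mpr m.factorial_ne_zero
  have hS : ∀ m : ℕ, ∑ k ∈ range (m + 1), (-1 : R) ^ k * stmt7F a b binv m k
      = ((m.factorial : ℚ)⁻¹) • v m := by
    intro m
    rw [hv' m, smul_smul, inv_mul_cancel₀ (hne m), one_smul]
  intro n
  have key : v n = a n * binv
      - ∑ ℓ ∈ Icc 1 n, (n.choose ℓ : ℚ) • (v (n - ℓ) * (b ℓ * binv)) := by
    rw [hv' n, Finset.sum_range_succ']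
    have h1 : ∀ i, (-1 : R) ^ (i + 1) * stmt7F a b binv n (i + 1)
        = ∑ ℓ ∈ Icc 1 n, -(((-1 : R) ^ i * stmt7F a b binv (n - ℓ) i) *
            (((ℓ.factorial : ℚ)⁻¹) • (b ℓ * binv))) := by
      intro i
      rw [stmt7F_succ, Finset.mul_sum]
      refine Finset.sum_congr rfl fun ℓ _ => ?_
      rw [pow_succ, mul_assoc, neg_one_mul, mul_neg, ← mul_assoc]
    simp only [h1, pow_zero, one_mul, stmt7F_zero]
    rw [Finset.sum_comm]
    have h2 : ∀ ℓ ∈ Icc 1 n,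
        ∑ i ∈ range n, -(((-1 : R) ^ i * stmt7F a b binv (n - ℓ) i) *
            (((ℓ.factorial : ℚ)⁻¹) • (b ℓ * binv)))
        = -(((((n - ℓ).factorial : ℚ)⁻¹) • v (n - ℓ)) *
            (((ℓ.factorial : ℚ)⁻¹) • (b ℓ * binv))) := by
      intro ℓ hℓ
      rw [mem_Icc] at hℓ
      rw [Finset.sum_neg_distrib, ← Finset.sum_mul]
      have hsub : ∑ i ∈ range n, (-1 : R) ^ i * stmt7F a b binv (n - ℓ) i
          = ∑ i ∈ range (n - ℓ + 1), (-1 : R) ^ i * stmt7F a b binv (n - ℓ) i := by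
        refine (Finset.sum_subset ?_ ?_).symm
        · exact Finset.range_subset_range.mpr (by omega)
        · intro i _ hi
          rw [mem_range, not_lt] at hi
          rw [stmt7F_of_lt a b binv (by omega), mul_zero]
      rw [hsub, hS (n - ℓ)]
    rw [Finset.sum_congr rfl h2, smul_add, Finset.smul_sum,
      smul_smul, mul_inv_cancel₀ (hne n), one_smul]
    have h3 : ∀ ℓ ∈ Icc 1 n,
        (n.factorial : ℚ) • -(((((n - ℓ).factorial : ℚ)⁻¹) • v (n - ℓ)) *
            (((ℓ.factorial : ℚ)⁻¹) • (b ℓ * binv)))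
        = -((n.choose ℓ : ℚ) • (v (n - ℓ) * (b ℓ * binv))) := by
      intro ℓ hℓ
      rw [mem_Icc] at hℓ
      rw [smul_mul_assoc, mul_smul_comm, smul_smul, smul_neg, smul_smul]
      congr 2
      rw [Nat.cast_choose ℚ hℓ.2, div_eq_mul_inv, mul_inv]
      ring
    rw [Finset.sum_congr rfl h3, Finset.sum_neg_distrib]
    abel
  calc a n = v n * b 0 + ∑ ℓ ∈ Icc 1 n, (n.choose ℓ : ℚ) • (v (n - ℓ) * b ℓ) := by
        rw [key, sub_mul, Finset.sum_mul, mul_assoc, hb', mul_one]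
        have h4 : ∀ ℓ ∈ Icc 1 n,
            ((n.choose ℓ : ℚ) • (v (n - ℓ) * (b ℓ * binv))) * b 0
            = (n.choose ℓ : ℚ) • (v (n - ℓ) * b ℓ) := by
          intro ℓ _
          rw [smul_mul_assoc, mul_assoc, mul_assoc, hb', mul_one]
        rw [Finset.sum_congr rfl h4]
        abel
    _ = ∑ k ∈ Finset.range (n + 1), (n.choose k : ℚ) • (v (n - k) * b k) := by
        rw [Finset.sum_range_succ']
        simp only [Nat.choose_zero_right, Nat.cast_one, one_smul, Nat.sub_zero]
        rw [add_comm]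
        congr 1
        rw [show Icc 1 n = Ico 1 (n + 1) from (Finset.Ico_add_one_right_eq_Icc 1 n).symm,
          Finset.sum_Ico_eq_sum_range]
        simp only [Nat.add_sub_cancel]
        exact Finset.sum_congr rfl fun i _ => by rw [add_comm 1 i]
end
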